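/- Let f ∈ ℝ[X] be a sum of squares, say f = Σ_{i=1}^r s_i² with s_1,…,s_r ∈ ℝ[X], and let P := C(f) be the Newton polytope of f. Then for every i = 1,…,r, the Newton polytope of s_i is contained in P/2; equivalently, every exponent vector α in the support of s_i satisfies 2α ∈ P (viewing α as a point of ℝⁿ). -/

import Mathlib

open MvPolynomial Pointwise

set_option maxHeartbeats 1000000
noncomputable section

/-- The Newton polytope of `f`: the convex hull in `ℝⁿ` of the exponent vectors of the
monomials occurring in `f`. -/
def newtonPolytope {n : ℕ} (f : MvPolynomial (Fin n) ℝ) : Set (Fin n → ℝ) :=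
  convexHull ℝ ((fun σ : Fin n →₀ ℕ => fun i => (σ i : ℝ)) '' (f.support : Set (Fin n →₀ ℕ)))

namespace NPaux

def emb (n : ℕ) : (Fin n →₀ ℕ) → (Fin n → ℝ) := fun σ i => (σ i : ℝ)

lemma emb_inj {n : ℕ} : Function.Injective (emb n) := by
  intro σ τ h
  ext i
  have := congrFun h i
  simpa [emb] using this

lemma emb_add {n : ℕ} (σ τ : Fin n →₀ ℕ) : emb n (σ + τ) = emb n σ + emb n τ := by
  funext i
  simp [emb]

end NPaux

open NPaux

theorem stmt_1 {n : ℕ} (hn : 1 ≤ n) (f : MvPolynomial (Fin n) ℝ)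
    (r : ℕ) (s : Fin r → MvPolynomial (Fin n) ℝ)
    (hf : f = ∑ i, (s i) ^ 2) :
    ∀ i : Fin r, ∀ α ∈ (s i).support,
      (fun j => (2 : ℝ) * (α j : ℝ)) ∈ newtonPolytope f := by
  classical
  intro i₀ α hα
  -- the union of the supports
  set A : Set (Fin n → ℝ) := emb n '' (⋃ i, ((s i).support : Set (Fin n →₀ ℕ))) with hA
  have hAfin : A.Finite := by
    apply Set.Finite.image
    exact Set.finite_iUnion (fun i => (s i).support.finite_toSet)
  set W : Set (Fin n → ℝ) := convexHull ℝ A with hW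
  have hWcomp : IsCompact W := hAfin.isCompact_convexHull ℝ
  have hWconv : Convex ℝ W := convex_convexHull ℝ A
  have hext : W.extremePoints ℝ ⊆ A := extremePoints_convexHull_subset
  have hextfin : (W.extremePoints ℝ).Finite := hAfin.subset hext
  have hWeq : convexHull ℝ (W.extremePoints ℝ) = W := by
    have := closure_convexHull_extremePoints hWcomp hWconv
    rw [(hextfin.isCompact_convexHull ℝ).isClosed.closure_eq] at this
    exact this
  -- key: doubled extreme points are in the support of f
  have key : ∀ e ∈ W.extremePoints ℝ, (2 : ℝ) • e ∈ newtonPolytope f := by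
    intro e he
    obtain ⟨σ, hσ, rfl⟩ := hext he
    obtain ⟨i₁, hi₁⟩ := Set.mem_iUnion.1 hσ
    have hcoeff : ∀ i : Fin r, coeff (σ + σ) ((s i) ^ 2) = (coeff σ (s i)) ^ 2 := by
      intro i
      rw [sq, coeff_mul]
      rw [Finset.sum_eq_single (σ, σ)]
      · rw [sq]
      · rintro ⟨β, γ⟩ hx hne
        by_contra h
        have hβ : coeff β (s i) ≠ 0 := fun h0 => h (by simp [h0])
        have hγ : coeff γ (s i) ≠ 0 := fun h0 => h (by simp [h0])
        have hβA : emb n β ∈ W := subset_convexHull ℝ A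
          ⟨β, Set.mem_iUnion.2 ⟨i, by simpa using hβ⟩, rfl⟩
        have hγA : emb n γ ∈ W := subset_convexHull ℝ A
          ⟨γ, Set.mem_iUnion.2 ⟨i, by simpa using hγ⟩, rfl⟩
        have hsum : β + γ = σ + σ := by simpa [Finset.mem_antidiagonal] using hx
        have hmid : emb n σ ∈ openSegment ℝ (emb n β) (emb n γ) := by
          refine ⟨1/2, 1/2, by norm_num, by norm_num, by norm_num, ?_⟩
          have := congrArg (emb n) hsum
          rw [emb_add, emb_add] at this
          funext j
          have := congrFun this j
          simp only [Pi.add_apply] at this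
          simp only [Pi.add_apply, Pi.smul_apply, smul_eq_mul]
          linarith
        obtain ⟨h1, h2⟩ := (mem_extremePoints.1 he).2 _ hβA _ hγA hmid
        have hβσ : β = σ := emb_inj h1
        have hγσ : γ = σ := emb_inj h2
        exact hne (by rw [hβσ, hγσ])
      · intro hnotin
        simp [Finset.mem_antidiagonal] at hnotin
    have hfc : coeff (σ + σ) f = ∑ i, (coeff σ (s i)) ^ 2 := by
      rw [hf, coeff_sum]
      exact Finset.sum_congr rfl (fun i _ => hcoeff i)
    have hpos : coeff (σ + σ) f ≠ 0 := by
      rw [hfc]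
      have h1 : (0:ℝ) < (coeff σ (s i₁)) ^ 2 := by
        have : coeff σ (s i₁) ≠ 0 := by simpa using hi₁
        positivity
      have h2 : (0:ℝ) < ∑ i, (coeff σ (s i)) ^ 2 :=
        Finset.sum_pos' (fun i _ => sq_nonneg _) ⟨i₁, Finset.mem_univ i₁, h1⟩
      exact ne_of_gt h2
    have hmem : σ + σ ∈ f.support := by simpa [mem_support_iff] using hpos
    have : emb n (σ + σ) ∈ newtonPolytope f :=
      subset_convexHull ℝ _ ⟨σ + σ, by simpa using hmem, rfl⟩
    have heq : (2 : ℝ) • emb n σ = emb n (σ + σ) := by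
      rw [emb_add]; funext j; simp only [Pi.add_apply, Pi.smul_apply, smul_eq_mul]; ring
    rw [heq]
    exact this
  -- conclude
  have hαW : emb n α ∈ W := subset_convexHull ℝ A
    ⟨α, Set.mem_iUnion.2 ⟨i₀, by simpa using hα⟩, rfl⟩
  have h2α : (2 : ℝ) • emb n α ∈ (2 : ℝ) • W := Set.smul_mem_smul_set hαW
  have hsub : (2 : ℝ) • W ⊆ newtonPolytope f := by
    rw [← hWeq, ← convexHull_smul]
    apply convexHull_min
    · rintro x ⟨e, he, rfl⟩
      exact key e he
    · exact convex_convexHull ℝ _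
  have : (fun j => (2 : ℝ) * (α j : ℝ)) = (2 : ℝ) • emb n α := by
    funext j; simp [emb]
  rw [this]
  exact hsub h2α
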